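/- Under periodic boundary conditions of period τ and ρ(P_i) < 1, the subsequence x_i(nτ) sampled at multiples of the period converges as n → ∞ to (I - P_i^τ)^{-1} Σ_{m=0}^{τ-1} P_i^m P_e x_b(τ - 1 - m), and this limit is independent of x_i(0). -/

import Mathlib

open Matrix Filter

/-- In a complex Banach algebra, if the spectral radius is `< 1` then powers tend to zero. -/
lemma aux_pow_tendsto_zero {A : Type*} [NormedRing A] [NormedAlgebra ℂ A] [CompleteSpace A]
    (a : A) (h : spectralRadius ℂ a < 1) :
    Tendsto (fun n : ℕ => a ^ n) atTop (nhds 0) := by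
  obtain ⟨r, hr1, hr2⟩ := ENNReal.lt_iff_exists_nnreal_btwn.mp h
  have hgel := spectrum.pow_nnnorm_pow_one_div_tendsto_nhds_spectralRadius a
  have key : ∀ᶠ n : ℕ in atTop, ‖a ^ n‖ ≤ (r : ℝ) ^ n := by
    filter_upwards [hgel.eventually_lt_const hr1, eventually_ge_atTop 1] with n hn hn1
    have hne : (n : ℝ) ≠ 0 := Nat.cast_ne_zero.mpr (by omega)
    have h2 : ((‖a ^ n‖₊ : ENNReal) ^ (1 / (n : ℝ))) ^ (n : ℝ) ≤ (r : ENNReal) ^ (n : ℝ) :=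
      ENNReal.rpow_le_rpow hn.le (by positivity)
    rw [← ENNReal.rpow_mul, one_div, inv_mul_cancel₀ hne, ENNReal.rpow_one,
      ENNReal.rpow_natCast, ← ENNReal.coe_pow, ENNReal.coe_le_coe] at h2
    exact_mod_cast h2
  have hrlt : (r : ℝ) < 1 := by exact_mod_cast hr2
  exact squeeze_zero_norm' key (tendsto_pow_atTop_nhds_zero_of_lt_one r.coe_nonneg hrlt)

/-- Under τ-periodic boundary conditions, the subsequence sampled at multiples
of the period converges to a limit independent of the initial internal state. -/
theorem stmt_10 {K M : ℕ} (Pe : Matrix (Fin M) (Fin K) ℝ)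
    (Pi_ : Matrix (Fin M) (Fin M) ℝ)
    (hspec : ∀ μ ∈ spectrum ℂ (Pi_.map (algebraMap ℝ ℂ)), ‖μ‖ < 1)
    (τ : ℕ) (hτ : 1 ≤ τ) (xb : ℕ → Fin K → ℝ)
    (hper : ∀ t, xb (t + τ) = xb t)
    (x : ℕ → Fin M → ℝ)
    (hdyn : ∀ k, x (k + 1) = Pe.mulVec (xb k) + Pi_.mulVec (x k)) :
    Filter.Tendsto (fun n => x (n * τ)) Filter.atTop
      (nhds ((1 - Pi_ ^ τ)⁻¹.mulVec
        (∑ m ∈ Finset.range τ, (Pi_ ^ m).mulVec (Pe.mulVec (xb (τ - 1 - m)))))) := by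
  classical
  rcases Nat.eq_zero_or_pos M with hM | hM
  · haveI : IsEmpty (Fin M) := by rw [hM]; infer_instance
    haveI : Subsingleton (Fin M → ℝ) := inferInstance
    have hconst : (fun n => x (n * τ)) =
        fun _ => (1 - Pi_ ^ τ)⁻¹.mulVec
          (∑ m ∈ Finset.range τ, (Pi_ ^ m).mulVec (Pe.mulVec (xb (τ - 1 - m)))) :=
      funext fun n => Subsingleton.elim _ _
    rw [hconst]
    exact tendsto_const_nhds
  -- Main case : M ≥ 1
  set A : Matrix (Fin M) (Fin M) ℝ := Pi_ ^ τ with hA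
  set c : Fin M → ℝ :=
    ∑ m ∈ Finset.range τ, (Pi_ ^ m).mulVec (Pe.mulVec (xb (τ - 1 - m))) with hc
  -- sum-linearity of mulVec
  have hsum : ∀ (P : Matrix (Fin M) (Fin M) ℝ) (s : Finset ℕ) (f : ℕ → Fin M → ℝ),
      P.mulVec (∑ j ∈ s, f j) = ∑ j ∈ s, P.mulVec (f j) := by
    intro P s f
    ext i
    simp only [Matrix.mulVec, dotProduct, Finset.sum_apply, Finset.mul_sum]
    exact Finset.sum_comm
  -- the general unrolling of the dynamics
  have hstep : ∀ k m : ℕ, x (k + m) = (Pi_ ^ m).mulVec (x k)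
      + ∑ j ∈ Finset.range m, (Pi_ ^ j).mulVec (Pe.mulVec (xb (k + m - 1 - j))) := by
    intro k m
    induction m with
    | zero => simp
    | succ m ih =>
      have h1 : k + (m + 1) = (k + m) + 1 := by omega
      rw [h1, hdyn, ih, Matrix.mulVec_add, Matrix.mulVec_mulVec, ← pow_succ',
        hsum]
      have h2 : ∀ j ∈ Finset.range m,
          Pi_.mulVec ((Pi_ ^ j).mulVec (Pe.mulVec (xb (k + m - 1 - j))))
          = (Pi_ ^ (j + 1)).mulVec (Pe.mulVec (xb (k + m - 1 - j))) := by
        intro j _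
        rw [Matrix.mulVec_mulVec, ← pow_succ']
      rw [Finset.sum_congr rfl h2]
      have h3 : ∑ j ∈ Finset.range (m + 1),
          (Pi_ ^ j).mulVec (Pe.mulVec (xb (k + m + 1 - 1 - j)))
          = (∑ j ∈ Finset.range m,
              (Pi_ ^ (j + 1)).mulVec (Pe.mulVec (xb (k + m - 1 - j))))
            + Pe.mulVec (xb (k + m)) := by
        rw [Finset.sum_range_succ'
          (fun j => (Pi_ ^ j).mulVec (Pe.mulVec (xb (k + m + 1 - 1 - j)))) m]
        congr 1
        · refine Finset.sum_congr rfl fun j _ => ?_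
          have hj : k + m + 1 - 1 - (j + 1) = k + m - 1 - j := by omega
          rw [hj]
        · have hj : k + m + 1 - 1 - 0 = k + m := by omega
          rw [hj, pow_zero, Matrix.one_mulVec]
      rw [h3]
      abel
  -- periodicity iterated
  have hperN : ∀ (n s : ℕ), xb (s + n * τ) = xb s := by
    intro n
    induction n with
    | zero => simp
    | succ n ih =>
      intro s
      have : s + (n + 1) * τ = (s + n * τ) + τ := by ring
      rw [this, hper, ih]
  -- the sampled recurrence
  have hrec : ∀ n : ℕ, x ((n + 1) * τ) = A.mulVec (x (n * τ)) + c := by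
    intro n
    have h1 : (n + 1) * τ = n * τ + τ := by ring
    rw [h1, hstep (n * τ) τ, hc, hA]
    congr 1
    refine Finset.sum_congr rfl fun j hj => ?_
    have hj' : j < τ := Finset.mem_range.mp hj
    have : n * τ + τ - 1 - j = (τ - 1 - j) + n * τ := by omega
    rw [this, hperN]
  -- complex matrices with the L∞-operator norm
  set B : Matrix (Fin M) (Fin M) ℂ := Pi_.map (algebraMap ℝ ℂ) with hB
  haveI : NeZero M := ⟨by omega⟩
  haveI : Nontrivial (Matrix (Fin M) (Fin M) ℂ) := by
    refine ⟨0, 1, fun h => ?_⟩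
    have := congr_fun (congr_fun h ⟨0, hM⟩) ⟨0, hM⟩
    simp [Matrix.one_apply_eq] at this
  letI : NormedRing (Matrix (Fin M) (Fin M) ℂ) := Matrix.linftyOpNormedRing
  letI : NormedAlgebra ℂ (Matrix (Fin M) (Fin M) ℂ) := Matrix.linftyOpNormedAlgebra
  letI : CompleteSpace (Matrix (Fin M) (Fin M) ℂ) :=
    FiniteDimensional.complete ℂ (Matrix (Fin M) (Fin M) ℂ)
  -- spectral radius of B^τ is < 1
  have hspec' : ∀ μ ∈ spectrum ℂ B, ‖μ‖₊ < 1 := by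
    intro μ hμ
    have := hspec μ hμ
    rw [← NNReal.coe_lt_coe]
    simpa using this
  have hmem_pow : ∀ z ∈ spectrum ℂ (B ^ τ), ‖z‖₊ < 1 := by
    intro z hz
    rw [spectrum.map_pow B τ] at hz
    obtain ⟨μ, hμ, rfl⟩ := hz
    have h1 : ‖μ ^ τ‖₊ = ‖μ‖₊ ^ τ := by simp
    rw [h1]
    exact pow_lt_one₀ zero_le (hspec' μ hμ) (by omega)
  have hrad : spectralRadius ℂ (B ^ τ) < 1 := by
    have := spectrum.spectralRadius_lt_of_forall_lt (B ^ τ) (r := 1) hmem_pow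
    simpa using this
  have hpow0 : Tendsto (fun n : ℕ => (B ^ τ) ^ n) atTop (nhds 0) :=
    aux_pow_tendsto_zero _ hrad
  have hnorm0 : Tendsto (fun n : ℕ => ‖(B ^ τ) ^ n‖) atTop (nhds 0) := by
    simpa using hpow0.norm
  -- entries of (B^τ)^n are the complexifications of entries of A^n
  have hmap : ∀ n : ℕ, (B ^ τ) ^ n = (A ^ n).map (algebraMap ℝ ℂ) := by
    intro n
    rw [hA, hB, ← pow_mul, ← pow_mul]
    have h := map_pow (RingHom.mapMatrix (algebraMap ℝ ℂ)) Pi_ (τ * n)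
    simp only [RingHom.mapMatrix_apply] at h
    exact h.symm
  -- entrywise bound
  have hentry_le : ∀ (X : Matrix (Fin M) (Fin M) ℂ) (i j : Fin M), ‖X i j‖ ≤ ‖X‖ := by
    intro X i j
    have h1 : ‖X i j‖₊ ≤ ‖X‖₊ := by
      rw [Matrix.linfty_opNNNorm_def]
      calc ‖X i j‖₊ ≤ ∑ k, ‖X i k‖₊ :=
            Finset.single_le_sum (f := fun k => ‖X i k‖₊) (fun _ _ => zero_le)
              (Finset.mem_univ j)
        _ ≤ _ := Finset.le_sup (f := fun i => ∑ k, ‖X i k‖₊) (Finset.mem_univ i)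
    exact_mod_cast h1
  have hentry : ∀ i j : Fin M, Tendsto (fun n : ℕ => (A ^ n) i j) atTop (nhds 0) := by
    intro i j
    refine squeeze_zero_norm (fun n => ?_) hnorm0
    have h1 : ((B ^ τ) ^ n) i j = algebraMap ℝ ℂ ((A ^ n) i j) := by
      rw [hmap n]; rfl
    have h2 : ‖(A ^ n) i j‖ = ‖((B ^ τ) ^ n) i j‖ := by
      rw [h1]
      simp
    rw [h2]
    exact hentry_le _ i j
  -- invertibility of 1 - A
  have hdet : IsUnit (1 - A).det := by
    rw [isUnit_iff_ne_zero]
    intro hdet0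
    have hdetC : (1 - B ^ τ).det = 0 := by
      have h1 : (RingHom.mapMatrix (algebraMap ℝ ℂ)) (1 - A) = 1 - B ^ τ := by
        rw [map_sub, _root_.map_one, hA, map_pow]
        simp only [RingHom.mapMatrix_apply, hB]
      rw [← h1, ← RingHom.map_det, hdet0, map_zero]
    have hnotunit : ¬ IsUnit (1 - B ^ τ) := by
      rw [Matrix.isUnit_iff_isUnit_det, hdetC]
      exact not_isUnit_zero
    have hone : (1 : ℂ) ∈ spectrum ℂ (B ^ τ) := by
      rw [spectrum.mem_iff]
      simpa using hnotunit
    have := hmem_pow 1 hone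
    simp at this
  have hinv : (1 - A) * (1 - A)⁻¹ = 1 := Matrix.mul_nonsing_inv _ hdet
  set L : Fin M → ℝ := (1 - A)⁻¹.mulVec c with hL
  have hAL : A.mulVec L = L - c := by
    have h1 : (1 - A).mulVec L = c := by
      rw [hL, Matrix.mulVec_mulVec, hinv, Matrix.one_mulVec]
    rw [Matrix.sub_mulVec, Matrix.one_mulVec] at h1
    rw [← h1]
    abel
  have hy : ∀ n : ℕ, x (n * τ) - L = (A ^ n).mulVec (x 0 - L) := by
    intro n
    induction n with
    | zero => simp
    | succ n ih =>
      rw [hrec n, pow_succ', ← Matrix.mulVec_mulVec, ← ih, Matrix.mulVec_sub, hAL]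
      abel
  have hx : ∀ n : ℕ, x (n * τ) = L + (A ^ n).mulVec (x 0 - L) := by
    intro n
    rw [← hy n]
    abel
  have hgoal : Tendsto (fun n : ℕ => L + (A ^ n).mulVec (x 0 - L)) atTop (nhds L) := by
    rw [tendsto_pi_nhds]
    intro i
    have h1 : Tendsto (fun n : ℕ => ((A ^ n).mulVec (x 0 - L)) i) atTop (nhds 0) := by
      have h2 : ∀ n : ℕ, ((A ^ n).mulVec (x 0 - L)) i
          = ∑ j, (A ^ n) i j * (x 0 - L) j := by
        intro n
        simp [Matrix.mulVec, dotProduct, mul_sub, Finset.sum_sub_distrib]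
      simp only [h2]
      have h3 : Tendsto (fun n : ℕ => ∑ j, (A ^ n) i j * (x 0 - L) j) atTop
          (nhds (∑ j : Fin M, (0 : ℝ))) :=
        tendsto_finset_sum _ fun j _ => by
          simpa using (hentry i j).mul_const ((x 0 - L) j)
      simpa using h3
    have := tendsto_const_nhds (α := ℕ) (x := L i) (f := atTop) |>.add h1
    simpa using this
  have hfun : (fun n : ℕ => x (n * τ)) = fun n : ℕ => L + (A ^ n).mulVec (x 0 - L) :=
    funext hx
  rw [hfun]
  exact hgoal
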